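/- Let n ≥ 1, m > 0 and 0 < θ ≤ 1, and let u₁ ∈ L^{1,θ}(ℝⁿ). Define A(ξ) = ∫_{ℝⁿ} (cos(x·ξ) − 1) u₁(x) dx and B(ξ) = ∫_{ℝⁿ} sin(x·ξ) u₁(x) dx. Then there exist δ₀ ∈ (0, δ) and a constant C > 0 depending only on n, δ₀ and θ such that for all t ≥ 1, ∫_{|ξ| ≤ δ₀} (|A(ξ)| + |B(ξ)|)² e^{-|ξ|² t} sin²(t b(ξ))/b(ξ)² dξ ≤ C m^{-2} ‖u₁‖_{1,θ}² t^{-n/2}. -/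

import Mathlib

open MeasureTheory Real

noncomputable section

/-- Euclidean space `ℝⁿ`. -/
abbrev E (n : ℕ) := EuclideanSpace ℝ (Fin n)

/-- The Fourier transform `û₁(ξ) = ∫ e^{-i x·ξ} u₁(x) dx`. -/
def fourierT (n : ℕ) (u₁ : E n → ℝ) (ξ : E n) : ℂ :=
  ∫ x : E n, Complex.exp (-(Complex.I * ((inner ℝ x ξ : ℝ) : ℂ))) * (u₁ x : ℂ)

/-- `b(r) = (1/2)√(4r² + 4m² log(1+r^{2θ}) − r⁴)` (low frequencies). -/
def bF (m θ r : ℝ) : ℝ :=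
  Real.sqrt (4 * r ^ 2 + 4 * m ^ 2 * Real.log (1 + r ^ (2 * θ)) - r ^ 4) / 2

/-- `d(r) = (1/2)√(r⁴ − 4r² − 4m² log(1+r^{2θ}))` (high frequencies). -/
def dF (m θ r : ℝ) : ℝ :=
  Real.sqrt (r ^ 4 - 4 * r ^ 2 - 4 * m ^ 2 * Real.log (1 + r ^ (2 * θ))) / 2


lemma min_le_rpow {θ s : ℝ} (hθ1 : 0 < θ) (hθ2 : θ ≤ 1) (hs : 0 ≤ s) : min s 1 ≤ s ^ θ := by
  rcases le_or_gt s 1 with h | h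
  · rw [min_eq_left h]
    rcases eq_or_lt_of_le hs with rfl | hs'
    · simpa using Real.rpow_nonneg le_rfl θ
    · calc s = s ^ (1:ℝ) := (Real.rpow_one s).symm
        _ ≤ s ^ θ := Real.rpow_le_rpow_of_exponent_ge hs' h hθ2
  · rw [min_eq_right h.le]
    calc (1:ℝ) = 1 ^ θ := (Real.one_rpow θ).symm
      _ ≤ s ^ θ := Real.rpow_le_rpow zero_le_one h.le hθ1.le

lemma abs_sin_le_rpow {θ : ℝ} (hθ1 : 0 < θ) (hθ2 : θ ≤ 1) (s : ℝ) : |Real.sin s| ≤ |s| ^ θ :=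
  le_trans (le_min Real.abs_sin_le_abs (Real.abs_sin_le_one s))
    (min_le_rpow hθ1 hθ2 (abs_nonneg s))

lemma abs_cos_sub_one_le_rpow {θ : ℝ} (hθ1 : 0 < θ) (hθ2 : θ ≤ 1) (s : ℝ) :
    |Real.cos s - 1| ≤ 2 * |s| ^ θ := by
  have h1 : |Real.cos s - 1| ≤ 2 * min |s| 1 := by
    rw [abs_sub_comm, abs_of_nonneg (by linarith [Real.cos_le_one s])]
    rcases le_or_gt |s| 1 with h | h
    · rw [min_eq_left h]
      have h2 := Real.one_sub_sq_div_two_le_cos (x := s)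
      have h3 : s ^ 2 ≤ |s| := by nlinarith [abs_nonneg s, sq_abs s]
      linarith [abs_nonneg s]
    · rw [min_eq_right h.le]
      linarith [Real.neg_one_le_cos s]
  refine h1.trans ?_
  have := min_le_rpow hθ1 hθ2 (abs_nonneg s)
  linarith

lemma half_le_log_one_add {s : ℝ} (hs : 0 ≤ s) (hs1 : s ≤ 1) : s / 2 ≤ Real.log (1 + s) := by
  have hpos : (0:ℝ) < 1 + s := by linarith
  have h1 : Real.log (1 + s)⁻¹ ≤ (1 + s)⁻¹ - 1 := Real.log_le_sub_one_of_pos (by positivity)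
  rw [Real.log_inv] at h1
  have h2 : (1 + s) * (1 + s)⁻¹ = 1 := mul_inv_cancel₀ hpos.ne'
  nlinarith [inv_nonneg.2 hpos.le]

lemma gauss_int (n : ℕ) {t : ℝ} (ht : 0 < t) :
    Integrable (fun v : E n => Real.exp (-(‖v‖ ^ 2) * t)) := by
  have h := GaussianFourier.integrable_cexp_neg_mul_sq_norm_add (V := E n) (b := (t : ℂ))
      (by simpa using ht) 0 0
  refine h.norm.congr (Filter.Eventually.of_forall fun v => ?_)
  simp [Complex.norm_exp, ← Complex.ofReal_pow]
  ring_nf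

lemma gauss_val (n : ℕ) {t : ℝ} (ht : 0 < t) :
    ∫ v : E n, Real.exp (-(‖v‖ ^ 2) * t) = (π / t) ^ ((n : ℝ) / 2) := by
  have : (fun v : E n => Real.exp (-(‖v‖ ^ 2) * t)) = fun v => Real.exp (-t * ‖v‖ ^ 2) := by
    funext v; ring_nf
  rw [this, GaussianFourier.integral_rexp_neg_mul_sq_norm ht]
  norm_num [finrank_euclideanSpace]

set_option maxHeartbeats 1000000

open MeasureTheory in
/-- the `F₃`-estimate on the low frequency zone. -/
theorem stmt9 (n : ℕ) (hn : 1 ≤ n) (m θ : ℝ) (hm : 0 < m) (hθ1 : 0 < θ) (hθ2 : θ ≤ 1)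
    (δ : ℝ) (hδ2 : 2 < δ)
    (hδneg : ∀ r : ℝ, 0 < r → r < δ →
      r ^ 4 - 4 * r ^ 2 - 4 * m ^ 2 * Real.log (1 + r ^ (2 * θ)) < 0)
    (hδpos : ∀ r : ℝ, δ ≤ r →
      0 ≤ r ^ 4 - 4 * r ^ 2 - 4 * m ^ 2 * Real.log (1 + r ^ (2 * θ)))
    (u₁ : E n → ℝ) (hu₁ : Integrable u₁)
    (hu₃ : Integrable (fun x => (1 + ‖x‖ ^ θ) * |u₁ x|)) :
    ∃ δ₀ : ℝ, 0 < δ₀ ∧ δ₀ < δ ∧ ∃ C : ℝ, 0 < C ∧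
      ∀ t : ℝ, 1 ≤ t →
        (∫ ξ in {ξ : E n | ‖ξ‖ ≤ δ₀},
            (|∫ x : E n, (Real.cos (inner ℝ x ξ : ℝ) - 1) * u₁ x| +
                |∫ x : E n, Real.sin (inner ℝ x ξ : ℝ) * u₁ x|) ^ 2 *
              Real.exp (-(‖ξ‖ ^ 2) * t) *
              Real.sin (t * bF m θ ‖ξ‖) ^ 2 / bF m θ ‖ξ‖ ^ 2) ≤
          C * m⁻¹ ^ 2 * (∫ x : E n, (1 + ‖x‖ ^ θ) * |u₁ x|) ^ 2 * t ^ (-(n : ℝ) / 2) := by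
  refine ⟨1, one_pos, by linarith, 18 * π ^ ((n : ℝ) / 2), by positivity, fun t ht => ?_⟩
  have ht0 : 0 < t := lt_of_lt_of_le one_pos ht
  set M : ℝ := ∫ x : E n, (1 + ‖x‖ ^ θ) * |u₁ x| with hMdef
  have hM0 : 0 ≤ M := integral_nonneg fun x => by positivity
  have hh : Integrable (fun x : E n => ‖x‖ ^ θ * |u₁ x|) := by
    refine (hu₃.sub hu₁.abs).congr (Filter.Eventually.of_forall fun x => ?_)
    simp only [Pi.sub_apply]; ring
  have hMle : ∫ x : E n, ‖x‖ ^ θ * |u₁ x| ≤ M := by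
    refine integral_mono hh hu₃ fun x => ?_
    have h1 : 0 ≤ ‖x‖ ^ θ := Real.rpow_nonneg (norm_nonneg x) θ
    nlinarith [abs_nonneg (u₁ x)]
  set K : ℝ := 18 * M ^ 2 / m ^ 2 with hKdef
  have hK0 : 0 ≤ K := by positivity
  have hgauss := gauss_int n ht0
  clear_value M K
  -- pointwise bound on the ball
  have key : ∀ ξ : E n, ξ ∈ {ξ : E n | ‖ξ‖ ≤ (1:ℝ)} →
      (|∫ x : E n, (Real.cos (inner ℝ x ξ : ℝ) - 1) * u₁ x| +
          |∫ x : E n, Real.sin (inner ℝ x ξ : ℝ) * u₁ x|) ^ 2 *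
        Real.exp (-(‖ξ‖ ^ 2) * t) *
        Real.sin (t * bF m θ ‖ξ‖) ^ 2 / bF m θ ‖ξ‖ ^ 2 ≤
      K * Real.exp (-(‖ξ‖ ^ 2) * t) := by
    intro ξ hξ
    simp only [Set.mem_setOf_eq] at hξ
    by_cases hξ0 : ξ = 0
    · subst hξ0
      simp only [inner_zero_right, Real.cos_zero, Real.sin_zero, sub_self, zero_mul,
        integral_zero, abs_zero, add_zero]
      norm_num
      positivity
    · have hr : 0 < ‖ξ‖ := norm_pos_iff.mpr hξ0
      set r : ℝ := ‖ξ‖ with hrdef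
      set a : ℝ := r ^ θ with hadef
      have ha : 0 < a := Real.rpow_pos_of_pos hr θ
      set A : ℝ := ∫ x : E n, (Real.cos (inner ℝ x ξ : ℝ) - 1) * u₁ x with hAdef
      set B : ℝ := ∫ x : E n, Real.sin (inner ℝ x ξ : ℝ) * u₁ x with hBdef
      set b : ℝ := bF m θ r with hbdef
      set e : ℝ := Real.exp (-(r ^ 2) * t) with hedef
      have he : 0 < e := Real.exp_pos _
      have habs : ∀ x : E n, |(inner ℝ x ξ : ℝ)| ^ θ ≤ ‖x‖ ^ θ * a := by
        intro x
        calc |(inner ℝ x ξ : ℝ)| ^ θ ≤ (‖x‖ * r) ^ θ :=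
              Real.rpow_le_rpow (abs_nonneg _) (abs_real_inner_le_norm x ξ) hθ1.le
          _ = ‖x‖ ^ θ * a := Real.mul_rpow (norm_nonneg x) hr.le
      have hA : |A| ≤ 2 * a * M := by
        have h0 : |A| ≤ ∫ x : E n, |(Real.cos (inner ℝ x ξ : ℝ) - 1) * u₁ x| := by
          rw [hAdef]
          simpa only [Real.norm_eq_abs] using
            norm_integral_le_integral_norm (μ := volume)
              (fun x : E n => (Real.cos (inner ℝ x ξ : ℝ) - 1) * u₁ x)
        have h1 : (∫ x : E n, |(Real.cos (inner ℝ x ξ : ℝ) - 1) * u₁ x|) ≤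
            ∫ x : E n, 2 * a * (‖x‖ ^ θ * |u₁ x|) := by
          refine integral_mono_of_nonneg (Filter.Eventually.of_forall fun x => abs_nonneg _)
            (hh.const_mul _) (Filter.Eventually.of_forall fun x => ?_)
          have hx1 : |Real.cos (inner ℝ x ξ : ℝ) - 1| ≤ 2 * (‖x‖ ^ θ * a) :=
            le_trans (abs_cos_sub_one_le_rpow hθ1 hθ2 _) (by linarith [habs x])
          simp only [abs_mul]
          refine le_trans (mul_le_mul_of_nonneg_right hx1 (abs_nonneg (u₁ x))) (le_of_eq ?_)
          ring
        have h2 : (∫ x : E n, 2 * a * (‖x‖ ^ θ * |u₁ x|)) = 2 * a * ∫ x : E n, ‖x‖ ^ θ * |u₁ x| :=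
          integral_const_mul _ _
        have h3 : 2 * a * (∫ x : E n, ‖x‖ ^ θ * |u₁ x|) ≤ 2 * a * M := by nlinarith
        linarith
      have hB : |B| ≤ a * M := by
        have h0 : |B| ≤ ∫ x : E n, |Real.sin (inner ℝ x ξ : ℝ) * u₁ x| := by
          rw [hBdef]
          simpa only [Real.norm_eq_abs] using
            norm_integral_le_integral_norm (μ := volume)
              (fun x : E n => Real.sin (inner ℝ x ξ : ℝ) * u₁ x)
        have h1 : (∫ x : E n, |Real.sin (inner ℝ x ξ : ℝ) * u₁ x|) ≤
            ∫ x : E n, a * (‖x‖ ^ θ * |u₁ x|) := by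
          refine integral_mono_of_nonneg (Filter.Eventually.of_forall fun x => abs_nonneg _)
            (hh.const_mul _) (Filter.Eventually.of_forall fun x => ?_)
          have hx1 : |Real.sin (inner ℝ x ξ : ℝ)| ≤ ‖x‖ ^ θ * a :=
            le_trans (abs_sin_le_rpow hθ1 hθ2 _) (habs x)
          simp only [abs_mul]
          refine le_trans (mul_le_mul_of_nonneg_right hx1 (abs_nonneg (u₁ x))) (le_of_eq ?_)
          ring
        have h2 : (∫ x : E n, a * (‖x‖ ^ θ * |u₁ x|)) = a * ∫ x : E n, ‖x‖ ^ θ * |u₁ x| :=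
          integral_const_mul _ _
        have h3 : a * (∫ x : E n, ‖x‖ ^ θ * |u₁ x|) ≤ a * M := by nlinarith
        linarith
      have hS : |A| + |B| ≤ 3 * a * M := by linarith
      -- lower bound on b²
      have hs2 : r ^ (2 * θ) = a ^ 2 := by
        rw [hadef, show (2 * θ) = θ * 2 by ring, Real.rpow_mul hr.le, ← Real.rpow_two]
      have hs1 : r ^ (2 * θ) ≤ 1 := Real.rpow_le_one hr.le hξ (by positivity)
      have hlog : r ^ (2 * θ) / 2 ≤ Real.log (1 + r ^ (2 * θ)) :=
        half_le_log_one_add (Real.rpow_nonneg hr.le _) hs1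
      have hrr : r ^ 2 ≤ 1 := by nlinarith
      have hr4 : r ^ 4 ≤ 4 * r ^ 2 := by nlinarith [sq_nonneg r]
      have hX : 2 * m ^ 2 * a ^ 2 ≤ 4 * r ^ 2 + 4 * m ^ 2 * Real.log (1 + r ^ (2 * θ)) - r ^ 4 := by
        rw [← hs2]; nlinarith
      have hX0 : (0:ℝ) ≤ 4 * r ^ 2 + 4 * m ^ 2 * Real.log (1 + r ^ (2 * θ)) - r ^ 4 :=
        le_trans (by positivity) hX
      have hb2 : b ^ 2 = (4 * r ^ 2 + 4 * m ^ 2 * Real.log (1 + r ^ (2 * θ)) - r ^ 4) / 4 := by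
        rw [hbdef, bF, div_pow, Real.sq_sqrt hX0]; norm_num
      have hb2ge : m ^ 2 * a ^ 2 / 2 ≤ b ^ 2 := by rw [hb2]; linarith
      have hb2pos : 0 < b ^ 2 := lt_of_lt_of_le (by positivity) hb2ge
      clear_value A B a r b e
      -- conclude
      rw [div_le_iff₀ hb2pos]
      have hnum : (|A| + |B|) ^ 2 * e * Real.sin (t * b) ^ 2 ≤ (3 * a * M) ^ 2 * e := by
        have h1 : (|A| + |B|) ^ 2 ≤ (3 * a * M) ^ 2 := pow_le_pow_left₀ (by positivity) hS 2
        have h2 : Real.sin (t * b) ^ 2 ≤ 1 := Real.sin_sq_le_one _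
        calc (|A| + |B|) ^ 2 * e * Real.sin (t * b) ^ 2 ≤ (3 * a * M) ^ 2 * e * 1 :=
              mul_le_mul (mul_le_mul_of_nonneg_right h1 he.le) h2 (sq_nonneg _) (by positivity)
          _ = (3 * a * M) ^ 2 * e := by ring
      have h5 : K * (m ^ 2 * a ^ 2 / 2) = 9 * M ^ 2 * a ^ 2 := by
        rw [hKdef]; field_simp; ring
      have h6 : K * (m ^ 2 * a ^ 2 / 2) ≤ K * b ^ 2 := mul_le_mul_of_nonneg_left hb2ge hK0
      calc (|A| + |B|) ^ 2 * e * Real.sin (t * b) ^ 2 ≤ (3 * a * M) ^ 2 * e := hnum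
        _ = (9 * M ^ 2 * a ^ 2) * e := by ring
        _ = (K * (m ^ 2 * a ^ 2 / 2)) * e := by rw [h5]
        _ ≤ (K * b ^ 2) * e := mul_le_mul_of_nonneg_right h6 he.le
        _ = K * e * b ^ 2 := by ring
  -- integral estimate
  have hSmeas : MeasurableSet {ξ : E n | ‖ξ‖ ≤ (1:ℝ)} :=
    (isClosed_le continuous_norm continuous_const).measurableSet
  refine le_trans (integral_mono_of_nonneg
      (Filter.Eventually.of_forall fun ξ => by positivity)
      ((hgauss.const_mul K).restrict)
      ((ae_restrict_iff' hSmeas).2 (Filter.Eventually.of_forall key))) ?_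
  have hstep2 : (∫ ξ in {ξ : E n | ‖ξ‖ ≤ (1:ℝ)}, K * Real.exp (-(‖ξ‖ ^ 2) * t)) ≤
      ∫ ξ : E n, K * Real.exp (-(‖ξ‖ ^ 2) * t) :=
    setIntegral_le_integral (hgauss.const_mul K)
      (Filter.Eventually.of_forall fun ξ => by positivity)
  have hstep3 : (∫ ξ : E n, K * Real.exp (-(‖ξ‖ ^ 2) * t)) = K * (π / t) ^ ((n : ℝ) / 2) := by
    rw [integral_const_mul, gauss_val n ht0]
  have hstep4 : K * (π / t) ^ ((n : ℝ) / 2) =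
      18 * π ^ ((n : ℝ) / 2) * m⁻¹ ^ 2 * M ^ 2 * t ^ (-(n : ℝ) / 2) := by
    rw [Real.div_rpow Real.pi_pos.le ht0.le, hKdef,
      show -(n : ℝ) / 2 = -((n : ℝ) / 2) by ring, Real.rpow_neg ht0.le]
    have h1 : (0:ℝ) < t ^ ((n : ℝ) / 2) := Real.rpow_pos_of_pos ht0 _
    field_simp
  linarith

end
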